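/- Let H be a numerical semigroup minimally generated by three elements. Then res(H) ≤ g(H) − n(H). -/

import Mathlib

namespace NumSgp

/-- A numerical semigroup: an additive submonoid of ℕ with finite complement. -/
def IsNumSgp (H : Set ℕ) : Prop :=
  0 ∈ H ∧ (∀ a ∈ H, ∀ b ∈ H, a + b ∈ H) ∧ Hᶜ.Finite

/-- Membership of an integer in (the image in ℤ of) `H ⊆ ℕ`. -/
def memZ (H : Set ℕ) (z : ℤ) : Prop := ∃ n ∈ H, (n : ℤ) = z

/-- The Frobenius number: the largest integer not in `H`. -/
noncomputable def frob (H : Set ℕ) : ℤ := sSup {z : ℤ | ¬ memZ H z}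

/-- The pseudo-Frobenius numbers of `H`. -/
def pseudoFrob (H : Set ℕ) : Set ℤ :=
  {f : ℤ | ¬ memZ H f ∧ ∀ m ∈ H, m ≠ 0 → memZ H (f + (m : ℤ))}

/-- The canonical ideal `Ω_H = {-f + h : f ∈ PF(H), h ∈ H}`. -/
def canIdeal (H : Set ℕ) : Set ℤ :=
  {z : ℤ | ∃ f ∈ pseudoFrob H, ∃ h ∈ H, z = -f + (h : ℤ)}

/-- The anti-canonical ideal `Ω_H⁻¹ = {x : x + Ω_H ⊆ H}`. -/
def antiCanIdeal (H : Set ℕ) : Set ℤ :=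
  {x : ℤ | ∀ w ∈ canIdeal H, memZ H (x + w)}

/-- The trace of `H`: the sumset `Ω_H + Ω_H⁻¹`. -/
def trace (H : Set ℕ) : Set ℤ :=
  {z : ℤ | ∃ w ∈ canIdeal H, ∃ x ∈ antiCanIdeal H, z = w + x}

/-- The conductor ideal `C_H = {x : x > Fr(H)}` (viewed inside ℤ). -/
noncomputable def condIdeal (H : Set ℕ) : Set ℤ := {z : ℤ | frob H < z}

/-- The residue of `H`: `|H ∖ tr(H)|`. -/
noncomputable def res (H : Set ℕ) : ℕ :=
  Set.ncard {h : ℕ | h ∈ H ∧ (h : ℤ) ∉ trace H}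

/-- The number of gaps `g(H)`. -/
noncomputable def gaps (H : Set ℕ) : ℕ := Set.ncard Hᶜ

/-- The number of non-gaps below the Frobenius number, `n(H)`. -/
noncomputable def nongaps (H : Set ℕ) : ℕ :=
  Set.ncard {x : ℕ | x ∈ H ∧ (x : ℤ) < frob H}

/-- `H` is symmetric if for all `x ∈ ℤ`, `x ∈ H` or `Fr(H) - x ∈ H`. -/
noncomputable def IsSymmetric (H : Set ℕ) : Prop :=
  ∀ z : ℤ, memZ H z ∨ memZ H (frob H - z)

/-- `H` is nearly Gorenstein if `M = H ∖ {0} ⊆ tr(H)`. -/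
def NearlyGorenstein (H : Set ℕ) : Prop :=
  ∀ h ∈ H, h ≠ 0 → (h : ℤ) ∈ trace H

/-- The submonoid of ℕ generated by a set. -/
def genBy (A : Set ℕ) : Set ℕ := (AddSubmonoid.closure A : Set ℕ)

end NumSgp

open NumSgp

section Basics

variable {H : Set ℕ}

lemma memZ_coe (n : ℕ) : memZ H n ↔ n ∈ H := by
  constructor
  · rintro ⟨m, hm, hmn⟩; rwa [Nat.cast_inj.mp hmn] at hm
  · intro h; exact ⟨n, h, rfl⟩

lemma memZ_nonneg {z : ℤ} (h : memZ H z) : 0 ≤ z := by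
  obtain ⟨n, _, rfl⟩ := h; positivity

lemma memZ_add_coe (hadd : ∀ a ∈ H, ∀ b ∈ H, a + b ∈ H) {z : ℤ}
    (hz : memZ H z) {b : ℕ} (hb : b ∈ H) : memZ H (z + b) := by
  obtain ⟨n, hn, rfl⟩ := hz
  exact ⟨n + b, hadd n hn b hb, by push_cast; ring⟩

/-- every representation of a memZ element -/
lemma memZ_iff_toNat {z : ℤ} : memZ H z ↔ 0 ≤ z ∧ z.toNat ∈ H := by
  constructor
  · rintro ⟨n, hn, rfl⟩; exact ⟨by positivity, by simpa using hn⟩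
  · rintro ⟨h0, h1⟩; exact ⟨z.toNat, h1, Int.toNat_of_nonneg h0⟩

end Basics

section WithF

variable {H : Set ℕ} {F : ℕ}

/-- gap structure: F is the largest gap -/
def IsFrob (H : Set ℕ) (F : ℕ) : Prop := F ∉ H ∧ ∀ n, F < n → n ∈ H

lemma memZ_of_big (hF : IsFrob H F) {z : ℤ} (hz : (F : ℤ) < z) : memZ H z := by
  have h0 : 0 ≤ z := le_trans (by positivity) hz.le
  rw [memZ_iff_toNat]
  exact ⟨h0, hF.2 _ (by omega)⟩

lemma frob_eq (hF : IsFrob H F) : frob H = (F : ℤ) := by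
  apply IsGreatest.csSup_eq
  constructor
  · rw [Set.mem_setOf_eq, memZ_coe]; exact hF.1
  · intro z hz
    by_contra hlt
    exact hz (memZ_of_big hF (by omega))

lemma F_in_pseudoFrob (hadd : ∀ a ∈ H, ∀ b ∈ H, a + b ∈ H) (hF : IsFrob H F) :
    (F : ℤ) ∈ pseudoFrob H := by
  refine ⟨by rw [memZ_coe]; exact hF.1, fun m hm hm0 => ?_⟩
  exact memZ_of_big hF (by omega)

lemma not_memZ_le_F (hF : IsFrob H F) {z : ℤ} (hz : ¬ memZ H z) : z ≤ (F:ℤ) := by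
  by_contra h; exact hz (memZ_of_big hF (by omega))

end WithF

section FGH

variable {H : Set ℕ} {n₁ n₂ n₃ : ℕ}

/-- the "non-Apery" upper set in the (n₂,n₃)-plane -/
def Upt (H : Set ℕ) (n₁ n₂ n₃ : ℕ) (b c : ℕ) : Prop :=
  memZ H (((b*n₂+c*n₃ : ℕ) : ℤ) - (n₁:ℤ))

lemma Upt_up (hmem : ∀ a b c : ℕ, a*n₁+b*n₂+c*n₃ ∈ H)
    (hrep : ∀ w ∈ H, ∃ a b c : ℕ, w = a*n₁+b*n₂+c*n₃)
    {b c b' c' : ℕ} (h : Upt H n₁ n₂ n₃ b c) (hb : b ≤ b') (hc : c ≤ c') :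
    Upt H n₁ n₂ n₃ b' c' := by
  obtain ⟨w, hw, hweq⟩ := h
  refine ⟨w + ((b'-b)*n₂ + (c'-c)*n₃), ?_, ?_⟩
  · obtain ⟨a, x, y, rfl⟩ := hrep w hw
    have e : a*n₁+x*n₂+y*n₃ + ((b'-b)*n₂ + (c'-c)*n₃) = a*n₁+(x+(b'-b))*n₂+(y+(c'-c))*n₃ := by ring
    rw [e]; exact hmem _ _ _
  · have e1 : ((b'-b : ℕ):ℤ) = (b':ℤ) - b := by omega
    have e2 : ((c'-c : ℕ):ℤ) = (c':ℤ) - c := by omega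
    push_cast [e1, e2]
    push_cast at hweq
    linarith [hweq]

lemma Upt_exists_min {b₀ c₀ : ℕ} (h : Upt H n₁ n₂ n₃ b₀ c₀) :
    ∃ u v, Upt H n₁ n₂ n₃ u v ∧ u ≤ b₀ ∧ v ≤ c₀ ∧
      ∀ u' v', Upt H n₁ n₂ n₃ u' v' → u' ≤ u → v' ≤ v → (u' = u ∧ v' = v) := by
  have key : ∀ n b₀ c₀, b₀ + c₀ = n → Upt H n₁ n₂ n₃ b₀ c₀ →
      ∃ u v, Upt H n₁ n₂ n₃ u v ∧ u ≤ b₀ ∧ v ≤ c₀ ∧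
        ∀ u' v', Upt H n₁ n₂ n₃ u' v' → u' ≤ u → v' ≤ v → (u' = u ∧ v' = v) := by
    intro n
    induction n using Nat.strong_induction_on with
    | _ n ih =>
      intro b₀ c₀ hn h
      by_cases hex : ∃ u' v', Upt H n₁ n₂ n₃ u' v' ∧ u' ≤ b₀ ∧ v' ≤ c₀ ∧ (u' ≠ b₀ ∨ v' ≠ c₀)
      · obtain ⟨u', v', hU, hu, hv, hne⟩ := hex
        have hlt : u' + v' < n := by omega
        obtain ⟨u, v, h1, h2, h3, h4⟩ := ih (u'+v') hlt u' v' rfl hU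
        exact ⟨u, v, h1, le_trans h2 hu, le_trans h3 hv, h4⟩
      · push_neg at hex
        refine ⟨b₀, c₀, h, le_refl _, le_refl _, fun u' v' hU hu hv => ?_⟩
        by_contra hne
        have := hex u' v' hU hu hv
        omega
  exact key _ b₀ c₀ rfl h

/-- a minimal interior point of U gives a pure relation u n₂ + v n₃ = γ n₁ -/
lemma Upt_min_rel (hmem : ∀ a b c : ℕ, a*n₁+b*n₂+c*n₃ ∈ H)
    (hrep : ∀ w ∈ H, ∃ a b c : ℕ, w = a*n₁+b*n₂+c*n₃)
    {u v : ℕ} (hu : 1 ≤ u) (hv : 1 ≤ v) (hU : Upt H n₁ n₂ n₃ u v)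
    (hmin1 : ¬ Upt H n₁ n₂ n₃ (u-1) v) (hmin2 : ¬ Upt H n₁ n₂ n₃ u (v-1)) :
    ∃ γ : ℕ, 1 ≤ γ ∧ u*n₂+v*n₃ = γ*n₁ := by
  obtain ⟨w, hw, hweq⟩ := hU
  obtain ⟨a, b, c, rfl⟩ := hrep w hw
  -- if b ≥ 1 then (u-1, v) ∈ U
  rcases Nat.eq_zero_or_pos b with hb | hb
  · rcases Nat.eq_zero_or_pos c with hc | hc
    · subst hb; subst hc
      refine ⟨a+1, by omega, ?_⟩
      have : ((u*n₂+v*n₃ : ℕ):ℤ) = ((a+1)*n₁ : ℕ) := by push_cast; push_cast at hweq; linarith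
      exact_mod_cast this
    · exfalso; apply hmin2
      refine ⟨a*n₁+b*n₂+(c-1)*n₃, hmem _ _ _, ?_⟩
      have e1 : ((c-1 : ℕ):ℤ) = (c:ℤ) - 1 := by omega
      have e2 : ((v-1 : ℕ):ℤ) = (v:ℤ) - 1 := by omega
      push_cast [e1, e2]
      push_cast at hweq
      linarith
  · exfalso; apply hmin1
    refine ⟨a*n₁+(b-1)*n₂+c*n₃, hmem _ _ _, ?_⟩
    have e1 : ((b-1 : ℕ):ℤ) = (b:ℤ) - 1 := by omega
    have e2 : ((u-1 : ℕ):ℤ) = (u:ℤ) - 1 := by omega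
    push_cast [e1, e2]
    push_cast at hweq
    linarith

end FGH

section FGH2

variable {H : Set ℕ} {n₁ n₂ n₃ : ℕ}

lemma pf_point (hmem : ∀ a b c : ℕ, a*n₁+b*n₂+c*n₃ ∈ H)
    (hrep : ∀ w ∈ H, ∃ a b c : ℕ, w = a*n₁+b*n₂+c*n₃)
    (hn₁ : 0 < n₁) {p : ℤ} (hp : p ∈ pseudoFrob H) :
    ∃ b c : ℕ, p = ((b*n₂+c*n₃ : ℕ) : ℤ) - (n₁:ℤ) := by
  have hn₁H : n₁ ∈ H := by have := hmem 1 0 0; simpa using this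
  have h1 : memZ H (p + n₁) := hp.2 n₁ hn₁H (by omega)
  obtain ⟨w, hw, hweq⟩ := h1
  obtain ⟨a, b, c, rfl⟩ := hrep w hw
  rcases Nat.eq_zero_or_pos a with ha | ha
  · subst ha
    refine ⟨b, c, ?_⟩
    push_cast at hweq ⊢
    linarith
  · exfalso
    apply hp.1
    refine ⟨(a-1)*n₁+b*n₂+c*n₃, hmem _ _ _, ?_⟩
    have e : ((a-1:ℕ):ℤ) = (a:ℤ)-1 := by omega
    push_cast [e]
    push_cast at hweq
    linarith

lemma gamma_eq (hmem : ∀ a b c : ℕ, a*n₁+b*n₂+c*n₃ ∈ H)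
    (hrep : ∀ w ∈ H, ∃ a b c : ℕ, w = a*n₁+b*n₂+c*n₃)
    {b₁ c₁ b₃ c₃ : ℕ}
    (notU1 : ¬ Upt H n₁ n₂ n₃ b₁ c₁) (notU3 : ¬ Upt H n₁ n₂ n₃ b₃ c₃)
    {ux vx γx uy vy γy : ℕ}
    (relX : ux*n₂+vx*n₃ = γx*n₁) (relY : uy*n₂+vy*n₃ = γy*n₁)
    (h1 : uy < ux) (h2 : vx < vy)
    (hbound1 : ux - uy ≤ b₁) (hbound3 : vy - vx ≤ c₃) : γx = γy := by
  have zrelX : (ux:ℤ)*n₂+(vx:ℤ)*n₃ = (γx:ℤ)*n₁ := by exact_mod_cast relX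
  have zrelY : (uy:ℤ)*n₂+(vy:ℤ)*n₃ = (γy:ℤ)*n₁ := by exact_mod_cast relY
  rcases lt_trichotomy γx γy with hlt | heq | hgt
  · -- (0, vy - vx) ∈ U, ≤ (b₃, c₃)
    exfalso
    apply notU3
    have hU : Upt H n₁ n₂ n₃ 0 (vy-vx) := by
      refine ⟨(γy-γx-1)*n₁+(ux-uy)*n₂+0*n₃, hmem _ _ _, ?_⟩
      have e1 : ((γy-γx-1:ℕ):ℤ) = (γy:ℤ)-γx-1 := by omega
      have e2 : ((ux-uy:ℕ):ℤ) = (ux:ℤ)-uy := by omega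
      have e3 : ((vy-vx:ℕ):ℤ) = (vy:ℤ)-vx := by omega
      push_cast [e1, e2, e3]
      linarith
    exact Upt_up hmem hrep hU (by omega) hbound3
  · exact heq
  · exfalso
    apply notU1
    have hU : Upt H n₁ n₂ n₃ (ux-uy) 0 := by
      refine ⟨(γx-γy-1)*n₁+0*n₂+(vy-vx)*n₃, hmem _ _ _, ?_⟩
      have e1 : ((γx-γy-1:ℕ):ℤ) = (γx:ℤ)-γy-1 := by omega
      have e2 : ((ux-uy:ℕ):ℤ) = (ux:ℤ)-uy := by omega
      have e3 : ((vy-vx:ℕ):ℤ) = (vy:ℤ)-vx := by omega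
      push_cast [e1, e2, e3]
      linarith
    exact Upt_up hmem hrep hU hbound1 (by omega)

end FGH2

section FGH3

variable {H : Set ℕ} {n₁ n₂ n₃ : ℕ}

/-- two distinct pseudo-Frobenius numbers have incomparable lattice points -/
lemma pf_incomp (hmem : ∀ a b c : ℕ, a*n₁+b*n₂+c*n₃ ∈ H)
    {p q : ℤ} (hp : p ∈ pseudoFrob H) (hq : q ∈ pseudoFrob H) (hne : p ≠ q)
    {bp cp bq cq : ℕ} (hpe : p = ((bp*n₂+cp*n₃ : ℕ) : ℤ) - (n₁:ℤ))
    (hqe : q = ((bq*n₂+cq*n₃ : ℕ) : ℤ) - (n₁:ℤ)) :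
    ¬ (bp ≤ bq ∧ cp ≤ cq) := by
  rintro ⟨hb, hc⟩
  set m : ℕ := (bq-bp)*n₂+(cq-cp)*n₃ with hm
  have hmH : m ∈ H := by have := hmem 0 (bq-bp) (cq-cp); simpa using this
  have hqpm : q = p + (m:ℤ) := by
    have e1 : ((bq-bp:ℕ):ℤ) = (bq:ℤ)-bp := by omega
    have e2 : ((cq-cp:ℕ):ℤ) = (cq:ℤ)-cp := by omega
    rw [hpe, hqe, hm]
    push_cast [e1, e2]
    ring
  rcases Nat.eq_zero_or_pos m with hm0 | hm0
  · apply hne; rw [hqpm, hm0]; push_cast; ring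
  · exact hq.1 (hqpm ▸ hp.2 m hmH (by omega))

/-- core FGH contradiction with sorted points -/
lemma fgh_core (hmem : ∀ a b c : ℕ, a*n₁+b*n₂+c*n₃ ∈ H)
    (hrep : ∀ w ∈ H, ∃ a b c : ℕ, w = a*n₁+b*n₂+c*n₃)
    (hn₂ : 0 < n₂) (hn₃ : 0 < n₃)
    {p₁ p₂ p₃ : ℤ} (hp₁ : p₁ ∈ pseudoFrob H) (hp₂ : p₂ ∈ pseudoFrob H)
    (hp₃ : p₃ ∈ pseudoFrob H) (h12 : p₁ ≠ p₂)
    {b₁ c₁ b₂ c₂ b₃ c₃ : ℕ}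
    (he₁ : p₁ = ((b₁*n₂+c₁*n₃ : ℕ) : ℤ) - (n₁:ℤ))
    (he₂ : p₂ = ((b₂*n₂+c₂*n₃ : ℕ) : ℤ) - (n₁:ℤ))
    (he₃ : p₃ = ((b₃*n₂+c₃*n₃ : ℕ) : ℤ) - (n₁:ℤ))
    (hb21 : b₂ < b₁) (hb32 : b₃ < b₂) (hc12 : c₁ < c₂) (hc23 : c₂ < c₃) :
    False := by
  have notU1 : ¬ Upt H n₁ n₂ n₃ b₁ c₁ := by rw [Upt, ← he₁]; exact hp₁.1
  have notU2 : ¬ Upt H n₁ n₂ n₃ b₂ c₂ := by rw [Upt, ← he₂]; exact hp₂.1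
  have notU3 : ¬ Upt H n₁ n₂ n₃ b₃ c₃ := by rw [Upt, ← he₃]; exact hp₃.1
  have hn₂H : n₂ ∈ H := by have := hmem 0 1 0; simpa using this
  have hn₃H : n₃ ∈ H := by have := hmem 0 0 1; simpa using this
  -- U-points from pseudo-Frobenius property
  have U2r : Upt H n₁ n₂ n₃ (b₂+1) c₂ := by
    have h := hp₂.2 n₂ hn₂H (by omega)
    unfold Upt
    have e : (((b₂+1)*n₂+c₂*n₃ : ℕ):ℤ) - (n₁:ℤ) = p₂ + (n₂:ℤ) := by rw [he₂]; push_cast; ring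
    rw [e]; exact h
  have U2u : Upt H n₁ n₂ n₃ b₂ (c₂+1) := by
    have h := hp₂.2 n₃ hn₃H (by omega)
    unfold Upt
    have e : ((b₂*n₂+(c₂+1)*n₃ : ℕ):ℤ) - (n₁:ℤ) = p₂ + (n₃:ℤ) := by rw [he₂]; push_cast; ring
    rw [e]; exact h
  have U1u : Upt H n₁ n₂ n₃ b₁ (c₁+1) := by
    have h := hp₁.2 n₃ hn₃H (by omega)
    unfold Upt
    have e : ((b₁*n₂+(c₁+1)*n₃ : ℕ):ℤ) - (n₁:ℤ) = p₁ + (n₃:ℤ) := by rw [he₁]; push_cast; ring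
    rw [e]; exact h
  -- minimal point A below (b₂+1, c₂)
  obtain ⟨uA, vA, hUA, huA, hvA, hminA⟩ := Upt_exists_min U2r
  have huA' : uA = b₂ + 1 := by
    by_contra hlt
    exact notU2 (Upt_up hmem hrep hUA (by omega) hvA)
  have hvA1 : 1 ≤ vA := by
    rcases Nat.eq_zero_or_pos vA with h0 | h; swap; · exact h
    exfalso; exact notU1 (Upt_up hmem hrep hUA (by omega) (by omega))
  have hA_n1 : ¬ Upt H n₁ n₂ n₃ (uA-1) vA := fun hU =>
    by have := hminA _ _ hU (by omega) (le_refl _); omega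
  have hA_n2 : ¬ Upt H n₁ n₂ n₃ uA (vA-1) := fun hU =>
    by have := hminA _ _ hU (le_refl _) (by omega); omega
  obtain ⟨γA, hγA, relA⟩ := Upt_min_rel hmem hrep (by omega) hvA1 hUA hA_n1 hA_n2
  rw [huA'] at relA
  -- c₁ < vA
  have hc1vA : c₁ < vA := by
    by_contra hge
    exact notU1 (Upt_up hmem hrep hUA (by omega) (by omega))
  -- minimal point B below (b₂, c₂+1)
  obtain ⟨uB, vB, hUB, huB, hvB, hminB⟩ := Upt_exists_min U2u
  have hvB' : vB = c₂ + 1 := by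
    by_contra hlt
    exact notU2 (Upt_up hmem hrep hUB huB (by omega))
  have huB1 : 1 ≤ uB := by
    rcases Nat.eq_zero_or_pos uB with h0 | h; swap; · exact h
    exfalso; exact notU3 (Upt_up hmem hrep hUB (by omega) (by omega))
  have hB_n1 : ¬ Upt H n₁ n₂ n₃ (uB-1) vB := fun hU =>
    by have := hminB _ _ hU (by omega) (le_refl _); omega
  have hB_n2 : ¬ Upt H n₁ n₂ n₃ uB (vB-1) := fun hU =>
    by have := hminB _ _ hU (le_refl _) (by omega); omega
  obtain ⟨γB, hγB, relB⟩ := Upt_min_rel hmem hrep huB1 (by omega) hUB hB_n1 hB_n2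
  rw [hvB'] at relB
  -- minimal point C below (b₁, c₁+1)
  obtain ⟨uC, vC, hUC, huC, hvC, hminC⟩ := Upt_exists_min U1u
  have hvC' : vC = c₁ + 1 := by
    by_contra hlt
    exact notU1 (Upt_up hmem hrep hUC huC (by omega))
  have huC1 : 1 ≤ uC := by
    rcases Nat.eq_zero_or_pos uC with h0 | h; swap; · exact h
    exfalso; exact notU2 (Upt_up hmem hrep hUC (by omega) (by omega))
  have hC_n1 : ¬ Upt H n₁ n₂ n₃ (uC-1) vC := fun hU =>
    by have := hminC _ _ hU (by omega) (le_refl _); omega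
  have hC_n2 : ¬ Upt H n₁ n₂ n₃ uC (vC-1) := fun hU =>
    by have := hminC _ _ hU (le_refl _) (by omega); omega
  obtain ⟨γC, hγC, relC⟩ := Upt_min_rel hmem hrep huC1 (by omega) hUC hC_n1 hC_n2
  rw [hvC'] at relC
  -- gamma_eq for A vs B :  X = A = (b₂+1, vA), Y = B = (uB, c₂+1)
  have hγAB : γA = γB := by
    refine gamma_eq hmem hrep notU1 notU3 relA relB (by omega) (by omega) (by omega) (by omega)
  -- rho * n₂ = sigma * n₃ where rho = b₂+1-uB, sigma = c₂+1-vA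
  have hrs : ((b₂+1-uB : ℕ):ℤ) * n₂ = ((c₂+1-vA : ℕ):ℤ) * n₃ := by
    have zA : ((b₂:ℤ)+1)*n₂+(vA:ℤ)*n₃ = (γA:ℤ)*n₁ := by exact_mod_cast relA
    have zB : (uB:ℤ)*n₂+((c₂:ℤ)+1)*n₃ = (γA:ℤ)*n₁ := by rw [hγAB]; exact_mod_cast relB
    have e1 : ((b₂+1-uB:ℕ):ℤ) = (b₂:ℤ)+1-uB := by omega
    have e2 : ((c₂+1-vA:ℕ):ℤ) = (c₂:ℤ)+1-vA := by omega
    rw [e1, e2]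
    linarith
  -- the key identity : uC*n₂ + (c₁+1)*n₃ = (b₂+1)*n₂ + vA*n₃ (over ℤ)
  have keyid : (uC:ℤ)*n₂ + ((c₁:ℤ)+1)*n₃ = ((b₂:ℤ)+1)*n₂ + (vA:ℤ)*n₃ := by
    rcases le_or_gt uC (b₂+1) with hle | hgt
    · -- C ≤ A, so C = A by minimality of A
      have hCA := hminA _ _ hUC (by omega) (by omega)
      have e1 : (uC:ℤ) = (b₂:ℤ)+1 := by omega
      have e2 : (vA:ℤ) = (c₁:ℤ)+1 := by omega
      linear_combination e1 * (n₂:ℤ) - e2 * (n₃:ℤ)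
    · -- b₂+1 < uC : apply gamma_eq to (C, A); first c₁+1 < vA
      have hstrict : c₁ + 1 < vA := by
        rcases lt_or_eq_of_le (by omega : c₁ + 1 ≤ vA) with h | h
        · exact h
        · exfalso
          -- A ≤ C and C minimal forces A = C, contradicting b₂+1 < uC
          have := hminC _ _ hUA (by omega) (by omega)
          omega
      have hγCA : γC = γA :=
        gamma_eq hmem hrep notU1 notU3 relC relA (by omega) (by omega) (by omega) (by omega)
      have zC : (uC:ℤ)*n₂+((c₁:ℤ)+1)*n₃ = (γA:ℤ)*n₁ := by rw [← hγCA]; exact_mod_cast relC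
      have zA : ((b₂:ℤ)+1)*n₂+(vA:ℤ)*n₃ = (γA:ℤ)*n₁ := by exact_mod_cast relA
      linarith
  -- final contradiction : p₁ - p₂ = k * n₂
  set k : ℤ := (b₁:ℤ) + 1 - uC - ((b₂+1-uB : ℕ):ℤ) with hk
  have hdiff : p₁ - p₂ = k * n₂ := by
    have e : ((c₂+1-vA:ℕ):ℤ) = (c₂:ℤ)+1-vA := by omega
    have e2 : ((b₂+1-uB:ℕ):ℤ) * (n₂:ℤ) = ((c₂:ℤ)+1-(vA:ℤ)) * n₃ := by rw [hrs, e]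
    rw [he₁, he₂, hk]
    push_cast
    linear_combination keyid + e2
  rcases lt_trichotomy k 0 with hneg | hzero | hpos
  · -- p₂ = p₁ + (-k) * n₂
    apply hp₂.1
    have hmH : (-k).toNat * n₂ ∈ H := by have := hmem 0 ((-k).toNat) 0; simpa using this
    have heq : p₂ = p₁ + (((-k).toNat * n₂ : ℕ) : ℤ) := by
      push_cast [Int.toNat_of_nonneg (by omega : (0:ℤ) ≤ -k)]
      linarith
    rw [heq]
    have hne0 : (-k).toNat * n₂ ≠ 0 := Nat.mul_ne_zero (by omega) (by omega)
    exact hp₁.2 _ hmH hne0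
  · apply h12
    rw [hzero, zero_mul] at hdiff
    linarith
  · apply hp₁.1
    have hmH : k.toNat * n₂ ∈ H := by have := hmem 0 (k.toNat) 0; simpa using this
    have heq : p₁ = p₂ + ((k.toNat * n₂ : ℕ) : ℤ) := by
      push_cast [Int.toNat_of_nonneg (by omega : (0:ℤ) ≤ k)]
      linarith
    rw [heq]
    have hne0 : k.toNat * n₂ ≠ 0 := Nat.mul_ne_zero (by omega) (by omega)
    exact hp₂.2 _ hmH hne0

end FGH3

section FGH4

variable {H : Set ℕ} {n₁ n₂ n₃ : ℕ}

/-- FGH : a 3-generated numerical semigroup has at most 2 pseudo-Frobenius numbers -/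
lemma fgh (hmem : ∀ a b c : ℕ, a*n₁+b*n₂+c*n₃ ∈ H)
    (hrep : ∀ w ∈ H, ∃ a b c : ℕ, w = a*n₁+b*n₂+c*n₃)
    (hn₁ : 0 < n₁) (hn₂ : 0 < n₂) (hn₃ : 0 < n₃)
    {p q r : ℤ} (hp : p ∈ pseudoFrob H) (hq : q ∈ pseudoFrob H) (hr : r ∈ pseudoFrob H)
    (hpq : p ≠ q) (hpr : p ≠ r) (hqr : q ≠ r) : False := by
  obtain ⟨bp, cp, hep⟩ := pf_point hmem hrep hn₁ hp
  obtain ⟨bq, cq, heq'⟩ := pf_point hmem hrep hn₁ hq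
  obtain ⟨br, cr, her⟩ := pf_point hmem hrep hn₁ hr
  have Ipq := pf_incomp hmem hp hq hpq hep heq'
  have Iqp := pf_incomp hmem hq hp hpq.symm heq' hep
  have Ipr := pf_incomp hmem hp hr hpr hep her
  have Irp := pf_incomp hmem hr hp hpr.symm her hep
  have Iqr := pf_incomp hmem hq hr hqr heq' her
  have Irq := pf_incomp hmem hr hq hqr.symm her heq'
  have Dpq : (bp < bq ∧ cq < cp) ∨ (bq < bp ∧ cp < cq) := by omega
  have Dpr : (bp < br ∧ cr < cp) ∨ (br < bp ∧ cp < cr) := by omega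
  have Dqr : (bq < br ∧ cr < cq) ∨ (br < bq ∧ cq < cr) := by omega
  rcases Dpq with ⟨h1a, h1b⟩ | ⟨h1a, h1b⟩ <;>
  rcases Dpr with ⟨h2a, h2b⟩ | ⟨h2a, h2b⟩ <;>
  rcases Dqr with ⟨h3a, h3b⟩ | ⟨h3a, h3b⟩
  · exact fgh_core hmem hrep hn₂ hn₃ hr hq hp hqr.symm her heq' hep h3a h1a h3b h1b
  · exact fgh_core hmem hrep hn₂ hn₃ hq hr hp hqr heq' her hep h3a h2a h3b h2b
  · omega
  · exact fgh_core hmem hrep hn₂ hn₃ hq hp hr hpq.symm heq' hep her h1a h2a h1b h2b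
  · exact fgh_core hmem hrep hn₂ hn₃ hr hp hq hpr.symm her hep heq' h2a h1a h2b h1b
  · omega
  · exact fgh_core hmem hrep hn₂ hn₃ hp hr hq hpr hep her heq' h2a h3a h2b h3b
  · exact fgh_core hmem hrep hn₂ hn₃ hp hq hr hpq hep heq' her h1a h3a h1b h3b

end FGH4

section Holes

variable {H : Set ℕ} {F : ℕ}

/-- a hole: both ℓ and F - ℓ are gaps -/
def IsHole (H : Set ℕ) (F ℓ : ℕ) : Prop := ℓ ∉ H ∧ F - ℓ ∉ H ∧ ℓ ≤ F

lemma gap_le (hF : IsFrob H F) {ℓ : ℕ} (h : ℓ ∉ H) : ℓ ≤ F := by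
  by_contra hgt; exact h (hF.2 _ (by omega))

lemma hole_ne_F (h0 : 0 ∈ H) {ℓ : ℕ} (h : IsHole H F ℓ) : ℓ ≠ F := by
  rintro rfl
  exact h.2.1 (by simpa using h0)

lemma hole_add (hadd : ∀ a ∈ H, ∀ b ∈ H, a + b ∈ H) (hF : IsFrob H F)
    {ℓ m : ℕ} (h : IsHole H F ℓ) (hm : m ∈ H) (hnm : ℓ + m ∉ H) :
    IsHole H F (ℓ + m) := by
  refine ⟨hnm, ?_, gap_le hF hnm⟩
  intro hmem
  apply h.2.1
  have hle : ℓ + m ≤ F := gap_le hF hnm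
  have : F - (ℓ + m) + m = F - ℓ := by omega
  rw [← this]
  exact hadd _ hmem _ hm

/-- ℕ-level pseudo-Frobenius -/
def PFn (H : Set ℕ) (p : ℕ) : Prop := p ∉ H ∧ ∀ m ∈ H, m ≠ 0 → p + m ∈ H

lemma PFn_pseudoFrob {p : ℕ} (h : PFn H p) : (p:ℤ) ∈ pseudoFrob H := by
  refine ⟨by rw [memZ_coe]; exact h.1, fun m hm hm0 => ?_⟩
  rw [show (p:ℤ) + m = ((p + m : ℕ) : ℤ) by push_cast; ring, memZ_coe]
  exact h.2 m hm hm0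

/-- every hole is dominated by a pseudo-Frobenius hole -/
lemma hole_dominated (h0 : 0 ∈ H) (hadd : ∀ a ∈ H, ∀ b ∈ H, a + b ∈ H)
    (hF : IsFrob H F) {ℓ : ℕ} (h : IsHole H F ℓ) :
    ∃ f, IsHole H F f ∧ PFn H f ∧ ∃ h' ∈ H, f = ℓ + h' := by
  have key : ∀ n ℓ, F - ℓ = n → IsHole H F ℓ →
      ∃ f, IsHole H F f ∧ PFn H f ∧ ∃ h' ∈ H, f = ℓ + h' := by
    intro n
    induction n using Nat.strong_induction_on with
    | _ n ih =>
      intro ℓ hn h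
      by_cases hPF : ∀ m ∈ H, m ≠ 0 → ℓ + m ∈ H
      · exact ⟨ℓ, h, ⟨h.1, hPF⟩, 0, h0, by omega⟩
      · push_neg at hPF
        obtain ⟨m, hm, hm0, hnm⟩ := hPF
        have hole' : IsHole H F (ℓ + m) := hole_add hadd hF h hm hnm
        have hlt : F - (ℓ + m) < n := by
          have := hole'.2.2; omega
        obtain ⟨f, hf1, hf2, h', hh', hfe⟩ := ih _ hlt (ℓ + m) rfl hole'
        exact ⟨f, hf1, hf2, m + h', hadd _ hm _ hh', by omega⟩
  exact key _ ℓ rfl h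

end Holes

section TraceBound

variable {H : Set ℕ} {F : ℕ}

/-- if b + k ∈ H for all k with F - k a gap, then b is in the trace -/
lemma mem_trace_of (h0 : 0 ∈ H) (hadd : ∀ a ∈ H, ∀ b ∈ H, a + b ∈ H)
    (hF : IsFrob H F) {b : ℕ} (hb : b ∈ H)
    (hK : ∀ k : ℤ, ¬ memZ H ((F:ℤ) - k) → memZ H ((b:ℤ) + k)) :
    (b:ℤ) ∈ trace H := by
  refine ⟨-(F:ℤ), ⟨(F:ℤ), F_in_pseudoFrob hadd hF, 0, h0, by push_cast; ring⟩,
    (F:ℤ) + b, ?_, by ring⟩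
  rintro w ⟨p, hp, h', hh', rfl⟩
  have hk := hK ((F:ℤ) - p) (by rw [show (F:ℤ) - ((F:ℤ) - p) = p by ring]; exact hp.1)
  have : (F:ℤ) + (b:ℤ) + (-p + (h':ℕ)) = ((b:ℤ) + ((F:ℤ) - p)) + (h':ℕ) := by ring
  rw [this]
  exact memZ_add_coe hadd hk hh'

/-- a residue element yields a hole of the form b + k -/
lemma res_elt_hole (hadd : ∀ a ∈ H, ∀ b ∈ H, a + b ∈ H) (hF : IsFrob H F)
    {b : ℕ} (hb : b ∈ H) {k : ℤ} (h1 : ¬ memZ H ((F:ℤ) - k)) (h2 : ¬ memZ H ((b:ℤ) + k)) :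
    0 ≤ k ∧ IsHole H F (b + k.toNat) := by
  have hkF : k ≤ F := by
    have := not_memZ_le_F hF h2; omega
  have hk0 : 0 ≤ k := by
    by_contra hneg
    exact h1 (memZ_of_big hF (by omega))
  refine ⟨hk0, ?_, ?_, ?_⟩
  · intro hmem
    apply h2
    rw [show (b:ℤ) + k = ((b + k.toNat : ℕ) : ℤ) by push_cast; omega, memZ_coe]
    exact hmem
  · intro hmem
    apply h1
    have hble : b + k.toNat ≤ F := by
      have : ¬ (b + k.toNat) ∈ H := by
        intro hc; apply h2
        rw [show (b:ℤ) + k = ((b + k.toNat : ℕ) : ℤ) by push_cast; omega, memZ_coe]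
        exact hc
      exact gap_le hF this
    rw [show (F:ℤ) - k = ((F - (b + k.toNat) : ℕ) : ℤ) + (b:ℕ) by push_cast; omega]
    exact memZ_add_coe hadd (by rw [memZ_coe]; exact hmem) hb
  · have := not_memZ_le_F hF h2
    omega

end TraceBound

section GenSetup

lemma genBy_eq_genBy {A B : Set ℕ} (hA : A ⊆ genBy B) (hB : B ⊆ genBy A) :
    genBy A = genBy B := by
  unfold genBy at *
  have h1 : AddSubmonoid.closure A ≤ AddSubmonoid.closure B := (AddSubmonoid.closure_le).2 hA
  have h2 : AddSubmonoid.closure B ≤ AddSubmonoid.closure A := (AddSubmonoid.closure_le).2 hB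
  have := le_antisymm h1 h2
  exact congrArg _ this

lemma mem_genBy3 {n₁ n₂ n₃ : ℕ} (a b c : ℕ) : a*n₁+b*n₂+c*n₃ ∈ genBy {n₁, n₂, n₃} := by
  have m1 : n₁ ∈ AddSubmonoid.closure ({n₁, n₂, n₃} : Set ℕ) :=
    AddSubmonoid.subset_closure (by simp)
  have m2 : n₂ ∈ AddSubmonoid.closure ({n₁, n₂, n₃} : Set ℕ) :=
    AddSubmonoid.subset_closure (by simp)
  have m3 : n₃ ∈ AddSubmonoid.closure ({n₁, n₂, n₃} : Set ℕ) :=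
    AddSubmonoid.subset_closure (by simp)
  have h1 := (AddSubmonoid.closure ({n₁, n₂, n₃} : Set ℕ)).nsmul_mem m1 a
  have h2 := (AddSubmonoid.closure ({n₁, n₂, n₃} : Set ℕ)).nsmul_mem m2 b
  have h3 := (AddSubmonoid.closure ({n₁, n₂, n₃} : Set ℕ)).nsmul_mem m3 c
  simp only [smul_eq_mul] at h1 h2 h3
  exact add_mem (add_mem h1 h2) h3

lemma rep_genBy3 {n₁ n₂ n₃ : ℕ} {w : ℕ} (hw : w ∈ genBy {n₁, n₂, n₃}) :
    ∃ a b c : ℕ, w = a*n₁+b*n₂+c*n₃ := by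
  induction hw using AddSubmonoid.closure_induction with
  | mem x hx =>
    rcases hx with rfl | rfl | rfl
    · exact ⟨1, 0, 0, by ring⟩
    · exact ⟨0, 1, 0, by ring⟩
    · exact ⟨0, 0, 1, by ring⟩
  | zero => exact ⟨0, 0, 0, by ring⟩
  | add x y hx hy ihx ihy =>
    obtain ⟨a, b, c, rfl⟩ := ihx
    obtain ⟨a', b', c', rfl⟩ := ihy
    exact ⟨a+a', b+b', c+c', by ring⟩

end GenSetup


/-- for a 3-generated numerical semigroup, `res(H) ≤ g(H) - n(H)`. -/
theorem stmt_9 (H : Set ℕ) (hnum : IsNumSgp H)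
    (hgen : ∃ n₁ n₂ n₃ : ℕ, H = genBy {n₁, n₂, n₃})
    (hmin : ∀ x y : ℕ, H ≠ genBy {x, y}) :
    (res H : ℤ) ≤ (gaps H : ℤ) - (nongaps H : ℤ) := by
  obtain ⟨h0, hadd, hfin⟩ := hnum
  obtain ⟨n₁, n₂, n₃, hgen⟩ := hgen
  -- generators are positive
  have hn₁ : 0 < n₁ := by
    rcases Nat.eq_zero_or_pos n₁ with rfl | h; swap; · exact h
    exact absurd (hgen.trans (genBy_eq_genBy
      (by rintro x (rfl | rfl | rfl)
          · exact zero_mem _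
          · exact AddSubmonoid.subset_closure (by simp)
          · exact AddSubmonoid.subset_closure (by simp))
      (by rintro x (rfl | rfl) <;> exact AddSubmonoid.subset_closure (by simp)))) (hmin n₂ n₃)
  have hn₂ : 0 < n₂ := by
    rcases Nat.eq_zero_or_pos n₂ with rfl | h; swap; · exact h
    exact absurd (hgen.trans (genBy_eq_genBy
      (by rintro x (rfl | rfl | rfl)
          · exact AddSubmonoid.subset_closure (by simp)
          · exact zero_mem _
          · exact AddSubmonoid.subset_closure (by simp))
      (by rintro x (rfl | rfl) <;> exact AddSubmonoid.subset_closure (by simp)))) (hmin n₁ n₃)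
  have hn₃ : 0 < n₃ := by
    rcases Nat.eq_zero_or_pos n₃ with rfl | h; swap; · exact h
    exact absurd (hgen.trans (genBy_eq_genBy
      (by rintro x (rfl | rfl | rfl)
          · exact AddSubmonoid.subset_closure (by simp)
          · exact AddSubmonoid.subset_closure (by simp)
          · exact zero_mem _)
      (by rintro x (rfl | rfl) <;> exact AddSubmonoid.subset_closure (by simp)))) (hmin n₁ n₂)
  have hmem : ∀ a b c : ℕ, a*n₁+b*n₂+c*n₃ ∈ H := by
    intro a b c; rw [hgen]; exact mem_genBy3 a b c
  have hrep : ∀ w ∈ H, ∃ a b c : ℕ, w = a*n₁+b*n₂+c*n₃ := by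
    intro w hw; rw [hgen] at hw; exact rep_genBy3 hw
  -- H has a gap
  have hne : Hᶜ.Nonempty := by
    rw [Set.nonempty_iff_ne_empty]
    intro hc
    apply hmin 1 1
    have huniv : H = Set.univ := by
      rw [← Set.compl_empty, ← hc, compl_compl]
    rw [huniv]
    ext x
    simp only [Set.mem_univ, true_iff]
    show x ∈ AddSubmonoid.closure ({1, 1} : Set ℕ)
    have h1 : (1:ℕ) ∈ AddSubmonoid.closure ({1, 1} : Set ℕ) :=
      AddSubmonoid.subset_closure (by simp)
    have := (AddSubmonoid.closure ({1, 1} : Set ℕ)).nsmul_mem h1 x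
    simpa using this
  -- largest gap F
  have hneF : hfin.toFinset.Nonempty := by rwa [Set.Finite.toFinset_nonempty]
  set F : ℕ := hfin.toFinset.max' hneF with hFdef
  have hF : IsFrob H F := by
    constructor
    · have := hfin.toFinset.max'_mem hneF
      rw [Set.Finite.mem_toFinset] at this
      exact this
    · intro n hn
      by_contra hc
      have : n ∈ hfin.toFinset := by rwa [Set.Finite.mem_toFinset]
      have := hfin.toFinset.le_max' n this
      omega
  have hfr : frob H = (F:ℤ) := frob_eq hF
  -- the set counted by nongaps
  have hNset : {x : ℕ | x ∈ H ∧ (x:ℤ) < frob H} = {x : ℕ | x ∈ H ∧ x < F} := by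
    ext x; rw [hfr]; simp [Nat.cast_lt]
  -- holes
  set Lset : Set ℕ := {ℓ | IsHole H F ℓ} with hLdef
  have hLsub : Lset ⊆ Hᶜ := fun ℓ hℓ => hℓ.1
  have hLfin : Lset.Finite := hfin.subset hLsub
  -- counting : ncard Lset + nongaps ≤ gaps
  have hcount : Set.ncard Lset + nongaps H ≤ gaps H := by
    set img : Set ℕ := (fun x => F - x) '' {x : ℕ | x ∈ H ∧ x < F} with himgdef
    have himgsub : img ⊆ Hᶜ := by
      rintro y ⟨x, ⟨hxH, hxF⟩, rfl⟩
      intro hc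
      have : F - x + x = F := by omega
      exact hF.1 (this ▸ hadd _ hc _ hxH)
    have hdisj : Disjoint Lset img := by
      rw [Set.disjoint_left]
      rintro y hy ⟨x, ⟨hxH, hxF⟩, rfl⟩
      have h2 := hy.2.1
      have : F - (F - x) = x := by omega
      rw [this] at h2
      exact h2 hxH
    have hNfin : ({x : ℕ | x ∈ H ∧ x < F} : Set ℕ).Finite :=
      Set.Finite.subset (Set.finite_Iio F) (fun x hx => hx.2)
    have himgfin : img.Finite := hNfin.image _
    have hinj : Set.InjOn (fun x => F - x) {x : ℕ | x ∈ H ∧ x < F} := by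
      intro x hx y hy hxy
      simp only [Set.mem_setOf_eq] at hx hy
      dsimp only at hxy
      omega
    have himgcard : img.ncard = Set.ncard {x : ℕ | x ∈ H ∧ x < F} :=
      Set.ncard_image_of_injOn hinj
    have hsub : Lset ∪ img ⊆ Hᶜ := Set.union_subset hLsub himgsub
    have := Set.ncard_le_ncard hsub hfin
    rw [Set.ncard_union_eq hdisj hLfin himgfin, himgcard] at this
    unfold gaps nongaps
    rw [hNset]
    exact this
  -- residue set analysis
  have hres : res H = Set.ncard {h : ℕ | h ∈ H ∧ (h : ℤ) ∉ trace H} := rfl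
  have hresK : ∀ b ∈ H, (b:ℤ) ∉ trace H →
      ∃ k : ℤ, ¬ memZ H ((F:ℤ) - k) ∧ ¬ memZ H ((b:ℤ) + k) := by
    intro b hb htr
    by_contra hc
    push_neg at hc
    exact htr (mem_trace_of h0 hadd hF hb (fun k hk => hc k hk))
  by_cases hLne : Lset.Nonempty
  · -- nonsymmetric case : get the unique pseudo-Frobenius hole f
    obtain ⟨ℓ₀, hℓ₀⟩ := hLne
    obtain ⟨f, hfhole, hfPF, _, _, _⟩ := hole_dominated h0 hadd hF hℓ₀
    have huniq : ∀ g, IsHole H F g → PFn H g → g = f := by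
      intro g hghole hgPF
      by_contra hne'
      refine fgh hmem hrep hn₁ hn₂ hn₃ (PFn_pseudoFrob hgPF) (PFn_pseudoFrob hfPF)
        (F_in_pseudoFrob hadd hF) ?_ ?_ ?_
      · exact_mod_cast hne'
      · have := hole_ne_F h0 hghole; exact_mod_cast this
      · have := hole_ne_F h0 hfhole; exact_mod_cast this
    set d : ℕ := F - f with hddef
    have hfF : f < F := by
      have h1 := hole_ne_F h0 hfhole
      have h2 := hfhole.2.2
      omega
    -- the injection b ↦ b + d maps the residue set into Lset
    have hmap : ∀ b ∈ {h : ℕ | h ∈ H ∧ (h : ℤ) ∉ trace H}, b + d ∈ Lset := by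
      rintro b ⟨hb, htr⟩
      obtain ⟨k, hk1, hk2⟩ := hresK b hb htr
      obtain ⟨hk0, hhole⟩ := res_elt_hole hadd hF hb hk1 hk2
      set kn : ℕ := k.toNat with hkn
      obtain ⟨g, hghole, hgPF, h', hh', hge⟩ := hole_dominated h0 hadd hF hhole
      have hgf : g = f := huniq g hghole hgPF
      -- f = b + kn + h'
      have hfe : f = b + kn + h' := by rw [← hgf, hge]
      have hknF : b + kn ≤ F := hhole.2.2
      -- b + d ∉ H
      have hbd : b + d ∉ H := by
        intro hc
        have hFk : (F - kn : ℕ) ∉ H := by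
          intro hc2
          apply hk1
          rw [show (F:ℤ) - k = ((F - kn : ℕ) : ℤ) by push_cast; omega, memZ_coe]
          exact hc2
        have : F - kn = (b + d) + h' := by omega
        rw [this] at hFk
        exact hFk (hadd _ hc _ hh')
      refine ⟨hbd, ?_, ?_⟩
      · have : F - (b + d) = f - b := by omega
        rw [this]
        intro hc
        have : f = b + (f - b) := by omega
        rw [this] at hfhole
        exact hfhole.1 (hadd _ hb _ hc)
      · omega
    have hinj2 : Set.InjOn (fun b => b + d) {h : ℕ | h ∈ H ∧ (h : ℤ) ∉ trace H} := by
      intro x _ y _ h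
      dsimp only at h
      omega
    have hresle : res H ≤ Set.ncard Lset :=
      Set.ncard_le_ncard_of_injOn (fun b => b + d) hmap hinj2 hLfin
    have : res H + nongaps H ≤ gaps H := by omega
    push_cast
    omega
  · -- symmetric case : residue set is empty
    have hresempty : {h : ℕ | h ∈ H ∧ (h : ℤ) ∉ trace H} = ∅ := by
      rw [Set.eq_empty_iff_forall_notMem]
      rintro b ⟨hb, htr⟩
      obtain ⟨k, hk1, hk2⟩ := hresK b hb htr
      obtain ⟨hk0, hhole⟩ := res_elt_hole hadd hF hb hk1 hk2
      exact hLne ⟨_, hhole⟩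
    have : res H = 0 := by rw [hres, hresempty, Set.ncard_empty]
    rw [this]
    push_cast
    omega
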